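/- Let I₊ = ⋃_{k≥1} [t_{2k}, t_{2k−1}) and I₋ = ⋃_{k≥0} [t_{2k+1}, t_{2k}) where (t_n) is a strictly decreasing sequence of positive reals with t_{n+1}/t_n → 0 (t₀ = ∞). Let F(t) = (1/t)λ((0,t)∩I₊) · (1/t)λ((0,t)∩I₋). Then lim_{n→∞} F(t_n) = 0 but limsup_{t→0} F(t) ≥ 1/4. -/

import Mathlib

open MeasureTheory Set Filter

/-- For a strictly decreasing positive sequence `(t_n)_{n≥1}` with `t_{n+1}/t_n → 0`
(and `t₀ = ∞`), setting `I₊ = ⋃_{k≥1}[t_{2k},t_{2k−1})`, `I₋ = ⋃_{k≥0}[t_{2k+1},t_{2k})`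
and `F(t) = (1/t)λ((0,t)∩I₊)·(1/t)λ((0,t)∩I₋)`, one has `F(t_n) → 0` but
`limsup_{t→0} F(t) ≥ 1/4`.  (Indices: `t n` denotes `t_n` for `n ≥ 1`; the `k = 0`
part of `I₋` is `[t₁, ∞)`.) -/
theorem stmt16 (t : ℕ → ℝ) (hdec : StrictAnti t) (hpos : ∀ n, 0 < t n)
    (hratio : Tendsto (fun n => t (n + 1) / t n) atTop (nhds 0))
    (Iplus Iminus : Set ℝ)
    (hIp : Iplus = ⋃ k : ℕ, Ico (t (2 * k + 2)) (t (2 * k + 1)))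
    (hIm : Iminus = Ici (t 1) ∪ ⋃ k : ℕ, Ico (t (2 * k + 3)) (t (2 * k + 2)))
    (F : ℝ → ℝ)
    (hF : ∀ x, F x = (1 / x * (volume (Ioo 0 x ∩ Iplus)).toReal) *
      (1 / x * (volume (Ioo 0 x ∩ Iminus)).toReal)) :
    Tendsto (fun n => F (t (n + 1))) atTop (nhds 0) ∧
      1 / 4 ≤ Filter.limsup F (nhdsWithin 0 (Ioi 0)) := by
  -- finiteness of truncated measures
  have hfin : ∀ (x : ℝ) (S : Set ℝ), volume (Ioo 0 x ∩ S) ≠ ⊤ := by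
    intro x S
    refine ne_top_of_le_ne_top ?_ (measure_mono inter_subset_left)
    simp [Real.volume_Ioo]
  -- truncated measure at most x
  have htr : ∀ x : ℝ, 0 < x → ∀ S : Set ℝ, (volume (Ioo 0 x ∩ S)).toReal ≤ x := by
    intro x hx S
    have h1 : volume (Ioo 0 x ∩ S) ≤ volume (Ioo 0 x) := measure_mono inter_subset_left
    have h2 := ENNReal.toReal_mono (by simp [Real.volume_Ioo]) h1
    simpa [Real.volume_Ioo, hx.le] using h2
  have hfac0 : ∀ x : ℝ, 0 < x → ∀ S : Set ℝ,
      0 ≤ 1 / x * (volume (Ioo 0 x ∩ S)).toReal := by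
    intro x hx S
    positivity
  have hfac1 : ∀ x : ℝ, 0 < x → ∀ S : Set ℝ,
      1 / x * (volume (Ioo 0 x ∩ S)).toReal ≤ 1 := by
    intro x hx S
    rw [one_div, inv_mul_le_iff₀ hx, mul_one]
    exact htr x hx S
  -- subset lemmas for the first part
  have hsubP : ∀ k : ℕ, Ioo 0 (t (2 * k + 2)) ∩ Iplus ⊆ Ioo 0 (t (2 * k + 3)) := by
    intro k x hx
    obtain ⟨⟨hx0, hxlt⟩, hxp⟩ := hx
    rw [hIp] at hxp
    simp only [mem_iUnion, mem_Ico] at hxp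
    obtain ⟨j, hj1, hj2⟩ := hxp
    refine ⟨hx0, ?_⟩
    have hkj : 2 * k + 2 < 2 * j + 2 := by
      by_contra hle
      push_neg at hle
      have := hdec.antitone hle
      linarith
    have : 2 * k + 3 ≤ 2 * j + 1 := by omega
    exact lt_of_lt_of_le hj2 (hdec.antitone this)
  have hsubM : ∀ k : ℕ, Ioo 0 (t (2 * k + 1)) ∩ Iminus ⊆ Ioo 0 (t (2 * k + 2)) := by
    intro k x hx
    obtain ⟨⟨hx0, hxlt⟩, hxm⟩ := hx
    rw [hIm] at hxm
    refine ⟨hx0, ?_⟩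
    rcases hxm with hxm | hxm
    · exfalso
      have h1 : t (2 * k + 1) ≤ t 1 := hdec.antitone (by omega)
      have := hxm
      simp only [mem_Ici] at this
      linarith
    · simp only [mem_iUnion, mem_Ico] at hxm
      obtain ⟨j, hj1, hj2⟩ := hxm
      have hkj : 2 * k + 1 < 2 * j + 3 := by
        by_contra hle
        push_neg at hle
        have := hdec.antitone hle
        linarith
      have : 2 * k + 2 ≤ 2 * j + 2 := by omega
      exact lt_of_lt_of_le hj2 (hdec.antitone this)
  -- key bound for part 1
  have key1 : ∀ n : ℕ, F (t (n + 1)) ≤ t (n + 2) / t (n + 1) := by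
    intro n
    rcases Nat.even_or_odd n with ⟨k, hk⟩ | ⟨k, hk⟩
    · -- n = 2k, n+1 = 2k+1: bound the Iminus factor
      have hn : n = 2 * k := by omega
      subst hn
      set x := t (2 * k + 1) with hx
      have hxpos : 0 < x := hpos _
      have hm : (volume (Ioo 0 x ∩ Iminus)).toReal ≤ t (2 * k + 2) := by
        have h1 : volume (Ioo 0 x ∩ Iminus) ≤ volume (Ioo 0 (t (2 * k + 2))) :=
          measure_mono (hsubM k)
        have h2 := ENNReal.toReal_mono (by simp [Real.volume_Ioo]) h1
        simpa [Real.volume_Ioo, (hpos (2 * k + 2)).le] using h2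
      rw [hF]
      have hb : 1 / x * (volume (Ioo 0 x ∩ Iminus)).toReal ≤ t (2 * k + 2) / x := by
        rw [one_div, ← div_eq_inv_mul]
        gcongr
      have h1 := hfac1 x hxpos Iplus
      have h0 := hfac0 x hxpos Iplus
      have h0' := hfac0 x hxpos Iminus
      have : (1 / x * (volume (Ioo 0 x ∩ Iplus)).toReal) *
          (1 / x * (volume (Ioo 0 x ∩ Iminus)).toReal) ≤ 1 * (t (2 * k + 2) / x) :=
        mul_le_mul h1 hb h0' zero_le_one
      have hgoal : (2 * k + 1) + 1 = 2 * k + 2 := by omega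
      rw [hgoal]
      linarith
    · -- n = 2k+1, n+1 = 2k+2: bound the Iplus factor
      have hn : n = 2 * k + 1 := by omega
      subst hn
      set x := t (2 * k + 2) with hx
      have hxpos : 0 < x := hpos _
      have hm : (volume (Ioo 0 x ∩ Iplus)).toReal ≤ t (2 * k + 3) := by
        have h1 : volume (Ioo 0 x ∩ Iplus) ≤ volume (Ioo 0 (t (2 * k + 3))) :=
          measure_mono (hsubP k)
        have h2 := ENNReal.toReal_mono (by simp [Real.volume_Ioo]) h1
        simpa [Real.volume_Ioo, (hpos (2 * k + 3)).le] using h2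
      rw [hF]
      have hb : 1 / x * (volume (Ioo 0 x ∩ Iplus)).toReal ≤ t (2 * k + 3) / x := by
        rw [one_div, ← div_eq_inv_mul]
        gcongr
      have h1 := hfac1 x hxpos Iminus
      have h0 := hfac0 x hxpos Iplus
      have h0' := hfac0 x hxpos Iminus
      have : (1 / x * (volume (Ioo 0 x ∩ Iplus)).toReal) *
          (1 / x * (volume (Ioo 0 x ∩ Iminus)).toReal) ≤ (t (2 * k + 3) / x) * 1 := by
        apply mul_le_mul hb h1 h0' (by have := hpos (2 * k + 3); positivity)
      have hgoal : (2 * k + 1) + 2 = 2 * k + 3 := by omega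
      rw [hgoal]
      linarith
  -- part 1
  have part1 : Tendsto (fun n => F (t (n + 1))) atTop (nhds 0) := by
    have hratio' : Tendsto (fun n => t (n + 2) / t (n + 1)) atTop (nhds 0) := by
      have := hratio.comp (tendsto_add_atTop_nat 1)
      exact this
    refine squeeze_zero (fun n => ?_) key1 hratio'
    rw [hF]
    exact mul_nonneg (hfac0 _ (hpos _) _) (hfac0 _ (hpos _) _)
  refine ⟨part1, ?_⟩
  -- t tends to 0
  have ht0 : Tendsto t atTop (nhds 0) := by
    have hanti : Antitone t := hdec.antitone
    have hbdd : BddBelow (range t) := ⟨0, by rintro _ ⟨n, rfl⟩; exact (hpos n).le⟩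
    have htend : Tendsto t atTop (nhds (⨅ n, t n)) := tendsto_atTop_ciInf hanti hbdd
    have hc0 : 0 ≤ ⨅ n, t n := le_ciInf fun n => (hpos n).le
    rcases eq_or_lt_of_le hc0 with h | h
    · rwa [← h] at htend
    · exfalso
      have h1 : Tendsto (fun n => t (n + 1) / t n) atTop
          (nhds ((⨅ n, t n) / ⨅ n, t n)) :=
        Tendsto.div (htend.comp (tendsto_add_atTop_nat 1)) htend h.ne'
      rw [div_self h.ne'] at h1
      exact one_ne_zero (tendsto_nhds_unique h1 hratio)
  -- ratio eventually small
  have hhalf := hratio.eventually_lt_const (by norm_num : (0 : ℝ) < 1 / 2)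
  obtain ⟨N, hN⟩ := eventually_atTop.1 hhalf
  -- limsup lower bound
  have hbound : IsBoundedUnder (· ≤ ·) (nhdsWithin 0 (Ioi 0)) F := by
    refine ⟨1, ?_⟩
    rw [eventually_map]
    filter_upwards [self_mem_nhdsWithin] with x hx
    have hx' : (0 : ℝ) < x := hx
    rw [hF]
    exact mul_le_one₀ (hfac1 x hx' Iplus) (hfac0 x hx' Iminus) (hfac1 x hx' Iminus)
  refine le_of_forall_sub_le fun ε hε => ?_
  refine le_limsup_of_frequently_le ?_ hbound
  obtain ⟨N', hN'⟩ := eventually_atTop.1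
    (hratio.eventually_lt_const (by positivity : (0 : ℝ) < 4 * ε))
  -- sequence 2 * t (2k+2) tends to 0 within Ioi 0
  have hts : Tendsto (fun k : ℕ => 2 * t (2 * k + 2)) atTop (nhdsWithin 0 (Ioi 0)) := by
    rw [tendsto_nhdsWithin_iff]
    constructor
    · have h1 : Tendsto (fun k : ℕ => 2 * k + 2) atTop atTop :=
        tendsto_atTop_mono (fun k => by simp only [id_eq]; omega) tendsto_id
      have := (ht0.comp h1).const_mul 2
      simpa using this
    · filter_upwards with k
      have := hpos (2 * k + 2)
      simp only [mem_Ioi]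
      linarith
  refine hts.frequently (Eventually.frequently ?_)
  filter_upwards [eventually_ge_atTop N, eventually_ge_atTop N'] with k hk1 hk2
  set a := t (2 * k + 2) with ha
  set b := t (2 * k + 3) with hb
  have hapos : 0 < a := hpos _
  have hbpos : 0 < b := hpos _
  have hba : b < a := hdec (by omega)
  have h2a : 2 * a < t (2 * k + 1) := by
    have h := hN (2 * k + 1) (by omega)
    have he : 2 * k + 1 + 1 = 2 * k + 2 := by omega
    rw [he] at h
    have hq : 0 < t (2 * k + 1) := hpos _
    rw [div_lt_iff₀ hq] at h
    linarith
  have hbra : b / a < 4 * ε := by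
    have h := hN' (2 * k + 2) (by omega)
    have he : 2 * k + 2 + 1 = 2 * k + 3 := by omega
    rw [he] at h
    exact h
  set x := 2 * a with hxdef
  have hxpos : 0 < x := by positivity
  -- lower bound for the Iplus factor
  have hIcoP : Ico a x ⊆ Ioo 0 x ∩ Iplus := by
    intro y hy
    refine ⟨⟨lt_of_lt_of_le hapos hy.1, hy.2⟩, ?_⟩
    rw [hIp]
    simp only [mem_iUnion, mem_Ico]
    exact ⟨k, hy.1, lt_of_lt_of_le hy.2 h2a.le⟩
  have hA : a ≤ (volume (Ioo 0 x ∩ Iplus)).toReal := by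
    have h1 : volume (Ico a x) ≤ volume (Ioo 0 x ∩ Iplus) := measure_mono hIcoP
    have h2 := ENNReal.toReal_mono (hfin x Iplus) h1
    rw [Real.volume_Ico, show x - a = a by rw [hxdef]; ring,
      ENNReal.toReal_ofReal hapos.le] at h2
    exact h2
  -- lower bound for the Iminus factor
  have hIcoM : Ico b a ⊆ Ioo 0 x ∩ Iminus := by
    intro y hy
    refine ⟨⟨lt_of_lt_of_le hbpos hy.1, by rw [hxdef]; linarith [hy.2]⟩, ?_⟩
    rw [hIm]
    right
    simp only [mem_iUnion, mem_Ico]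
    exact ⟨k, hy.1, hy.2⟩
  have hB : a - b ≤ (volume (Ioo 0 x ∩ Iminus)).toReal := by
    have h1 : volume (Ico b a) ≤ volume (Ioo 0 x ∩ Iminus) := measure_mono hIcoM
    have h2 := ENNReal.toReal_mono (hfin x Iminus) h1
    rw [Real.volume_Ico, ENNReal.toReal_ofReal (by linarith)] at h2
    exact h2
  rw [hF]
  have hA' : (1 : ℝ) / 2 ≤ 1 / x * (volume (Ioo 0 x ∩ Iplus)).toReal := by
    have : 1 / x * a ≤ 1 / x * (volume (Ioo 0 x ∩ Iplus)).toReal :=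
      mul_le_mul_of_nonneg_left hA (by positivity)
    have he : 1 / x * a = 1 / 2 := by
      rw [hxdef]; field_simp
    linarith
  have hB' : (a - b) / (2 * a) ≤ 1 / x * (volume (Ioo 0 x ∩ Iminus)).toReal := by
    have : 1 / x * (a - b) ≤ 1 / x * (volume (Ioo 0 x ∩ Iminus)).toReal :=
      mul_le_mul_of_nonneg_left hB (by positivity)
    have he : 1 / x * (a - b) = (a - b) / (2 * a) := by
      rw [hxdef]; ring
    linarith
  have hprod : (1 / 2) * ((a - b) / (2 * a)) ≤
      (1 / x * (volume (Ioo 0 x ∩ Iplus)).toReal) *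
      (1 / x * (volume (Ioo 0 x ∩ Iminus)).toReal) :=
    mul_le_mul hA' hB' (div_nonneg (by linarith) (by linarith))
      (le_trans (by norm_num) hA')
  have hbb : b ≤ 4 * ε * a := by
    rw [div_lt_iff₀ hapos] at hbra; linarith
  have h4 : 1 / 4 - ε ≤ (a - b) / (4 * a) := by
    rw [le_div_iff₀ (by positivity : (0 : ℝ) < 4 * a)]
    nlinarith
  have h5 : (1 : ℝ) / 2 * ((a - b) / (2 * a)) = (a - b) / (4 * a) := by ring
  linarith
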